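/- The decomposition of an element of K ≀_Γ H into a product of pairwise disjoint wreath cycles in K ≀_Γ Sym(Γ) is unique up to reordering of the factors. -/

import Mathlib

set_option linter.unusedSectionVars false

/-- The wreath product `K ≀_Γ Sym(Γ)` (with right-action conventions from the paper):
multiplication `(f,h)(e,g) = (f · e^{h⁻¹}, hg)` where `[γ](f·e^{h⁻¹}) = [γ]f * [γ^h]e`. -/
structure Wr (K : Type*) (Γ : Type*) where
  base : Γ → K
  top : Equiv.Perm Γ

namespace Wr

variable {K Γ : Type*} [Group K]

theorem ext' {w v : Wr K Γ} (h1 : w.base = v.base) (h2 : w.top = v.top) : w = v := by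
  cases w; cases v; cases h1; cases h2; rfl

instance : Group (Wr K Γ) where
  mul w v := ⟨fun γ => w.base γ * v.base (w.top γ), w.top.trans v.top⟩
  one := ⟨fun _ => 1, 1⟩
  inv w := ⟨fun γ => (w.base (w.top⁻¹ γ))⁻¹, w.top⁻¹⟩
  mul_assoc a b c := ext' (funext fun γ => mul_assoc _ _ _) (Equiv.trans_assoc _ _ _)
  one_mul a := ext' (funext fun γ => one_mul _) (Equiv.refl_trans _)
  mul_one a := ext' (funext fun γ => mul_one _) (Equiv.trans_refl _)
  inv_mul_cancel a := ext' (funext fun γ => inv_mul_cancel _) (Equiv.symm_trans_self _)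

/-- The support of a permutation, as a set. -/
def psupp (h : Equiv.Perm Γ) : Set Γ := {γ | h γ ≠ γ}

/-- The territory of a wreath product element. -/
def terr (w : Wr K Γ) : Set Γ := psupp w.top ∪ {γ | w.base γ ≠ 1}

/-- Wreath cycles: either trivial top and a singleton territory, or the top is a
single nontrivial cycle and the territory equals its support. -/
def IsWreathCycle (w : Wr K Γ) : Prop :=
  (w.top = 1 ∧ ∃ γ₀, terr w = {γ₀}) ∨ (w.top.IsCycle ∧ terr w = psupp w.top)

/-- The yade of `w` at `γ`: the ordered product `∏_{i=0}^{|h|-1} [γ^{h^i}]f`. -/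
noncomputable def yade (w : Wr K Γ) (γ : Γ) : K :=
  ((List.range (orderOf w.top)).map fun i => w.base ((w.top ^ i) γ)).prod

end Wr

namespace Wr

variable {K Γ : Type*} [Group K]

lemma mul_base' (w v : Wr K Γ) (γ : Γ) : (w * v).base γ = w.base γ * v.base (w.top γ) := rfl
lemma mul_top' (w v : Wr K Γ) (γ : Γ) : (w * v).top γ = v.top (w.top γ) := rfl
lemma one_base' (γ : Γ) : (1 : Wr K Γ).base γ = 1 := rfl
lemma one_top' (γ : Γ) : (1 : Wr K Γ).top γ = γ := rfl

lemma base_eq_one_of_not_mem_terr {w : Wr K Γ} {γ : Γ} (h : γ ∉ terr w) : w.base γ = 1 := by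
  by_contra hb; exact h (Or.inr hb)

lemma top_eq_self_of_not_mem_terr {w : Wr K Γ} {γ : Γ} (h : γ ∉ terr w) : w.top γ = γ := by
  by_contra hb; exact h (Or.inl hb)

lemma top_mem_terr {w : Wr K Γ} {γ : Γ} (h : γ ∈ terr w) : w.top γ ∈ terr w := by
  by_cases he : w.top γ = γ
  · rwa [he]
  · exact Or.inl fun hc => he (w.top.injective hc)

lemma top_inv_mem_terr {w : Wr K Γ} {γ : Γ} (h : γ ∈ terr w) : w.top⁻¹ γ ∈ terr w := by
  by_contra hc
  have h2 := top_eq_self_of_not_mem_terr hc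
  rw [← Equiv.Perm.mul_apply, mul_inv_cancel, Equiv.Perm.one_apply] at h2
  rw [h2] at h
  exact hc h

lemma prod_spec (l : List (Wr K Γ)) (hd : l.Pairwise fun z v => Disjoint (terr z) (terr v)) :
    (∀ γ, (∀ z ∈ l, γ ∉ terr z) → l.prod.base γ = 1 ∧ l.prod.top γ = γ) ∧
    (∀ z ∈ l, ∀ γ ∈ terr z, l.prod.base γ = z.base γ ∧ l.prod.top γ = z.top γ) := by
  induction l with
  | nil => exact ⟨fun γ _ => ⟨rfl, rfl⟩, fun z hz => absurd hz List.not_mem_nil⟩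
  | cons a t ih =>
    rw [List.pairwise_cons] at hd
    obtain ⟨ha, ht⟩ := hd
    have IH := ih ht
    constructor
    · intro γ hγ
      have hγa : γ ∉ terr a := hγ a (List.mem_cons_self)
      have H := IH.1 γ (fun z hz => hγ z (List.mem_cons_of_mem a hz))
      rw [List.prod_cons, mul_base', mul_top', base_eq_one_of_not_mem_terr hγa,
        top_eq_self_of_not_mem_terr hγa, one_mul]
      exact H
    · intro z hz γ hγ
      rcases List.mem_cons.mp hz with rfl | hz'
      · have hmem : z.top γ ∈ terr z := top_mem_terr hγ
        have H := IH.1 (z.top γ) fun v hv => Set.disjoint_left.mp (ha v hv) hmem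
        rw [List.prod_cons, mul_base', mul_top', H.1, H.2, mul_one]
        exact ⟨rfl, rfl⟩
      · have hγa : γ ∉ terr a := Set.disjoint_right.mp (ha z hz') hγ
        rw [List.prod_cons, mul_base', mul_top', base_eq_one_of_not_mem_terr hγa,
          top_eq_self_of_not_mem_terr hγa, one_mul]
        exact IH.2 z hz' γ hγ

/-- powers of an agreeing permutation agree on an invariant set -/
lemma zpow_agree {p q : Equiv.Perm Γ} {s : Set Γ}
    (hagree : ∀ δ ∈ s, q δ = p δ)
    (hinv : ∀ δ ∈ s, p δ ∈ s) (hinv' : ∀ δ ∈ s, p⁻¹ δ ∈ s) :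
    ∀ (i : ℤ) {γ : Γ}, γ ∈ s → (q ^ i) γ = (p ^ i) γ ∧ (p ^ i) γ ∈ s := by
  have hagree' : ∀ δ ∈ s, q⁻¹ δ = p⁻¹ δ := by
    intro δ hδ
    have h1 : q (p⁻¹ δ) = δ := by
      rw [hagree _ (hinv' δ hδ), ← Equiv.Perm.mul_apply, mul_inv_cancel, Equiv.Perm.one_apply]
    exact (Equiv.Perm.inv_eq_iff_eq).mpr h1.symm
  intro i
  induction i using Int.induction_on with
  | zero => intro γ hγ; simpa using hγ
  | succ n IH =>
    intro γ hγ
    have hq : (q : Equiv.Perm Γ) ^ ((n : ℤ) + 1) = q * q ^ (n : ℤ) := by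
      rw [add_comm, zpow_add, zpow_one]
    have hp : (p : Equiv.Perm Γ) ^ ((n : ℤ) + 1) = p * p ^ (n : ℤ) := by
      rw [add_comm, zpow_add, zpow_one]
    obtain ⟨h1, h2⟩ := IH hγ
    rw [hq, hp, Equiv.Perm.mul_apply, Equiv.Perm.mul_apply, h1, hagree _ h2]
    exact ⟨rfl, hinv _ h2⟩
  | pred n IH =>
    intro γ hγ
    have hq : (q : Equiv.Perm Γ) ^ (-(n : ℤ) - 1) = q⁻¹ * q ^ (-(n : ℤ)) := by
      rw [sub_eq_add_neg, add_comm, zpow_add, zpow_neg_one]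
    have hp : (p : Equiv.Perm Γ) ^ (-(n : ℤ) - 1) = p⁻¹ * p ^ (-(n : ℤ)) := by
      rw [sub_eq_add_neg, add_comm, zpow_add, zpow_neg_one]
    obtain ⟨h1, h2⟩ := IH hγ
    rw [hq, hp, Equiv.Perm.mul_apply, Equiv.Perm.mul_apply, h1, hagree' _ h2]
    exact ⟨rfl, hinv' _ h2⟩

/-- the territory of a wreath cycle is determined by the product -/
lemma terr_eq_sameCycle {z : Wr K Γ} (hz : IsWreathCycle z) {γ : Γ} (hγ : γ ∈ terr z)
    {q : Equiv.Perm Γ} (hq : ∀ δ ∈ terr z, q δ = z.top δ) :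
    terr z = {δ | q.SameCycle γ δ} := by
  have hkey := zpow_agree (p := z.top) hq (fun δ hδ => top_mem_terr hδ)
    (fun δ hδ => top_inv_mem_terr hδ)
  have hsc : ∀ δ, q.SameCycle γ δ ↔ z.top.SameCycle γ δ := by
    intro δ
    constructor
    · rintro ⟨i, hi⟩; exact ⟨i, by rw [← (hkey i hγ).1]; exact hi⟩
    · rintro ⟨i, hi⟩; exact ⟨i, by rw [(hkey i hγ).1]; exact hi⟩
  rcases hz with ⟨htop, γ₀, hterr⟩ | ⟨hcyc, hterr⟩
  · have hγ0 : γ = γ₀ := by have h' := hγ; rw [hterr] at h'; exact h'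
    subst hγ0
    rw [hterr]
    ext δ
    simp only [Set.mem_singleton_iff, Set.mem_setOf_eq, hsc, htop]
    constructor
    · rintro rfl; exact Equiv.Perm.SameCycle.refl _ _
    · rintro ⟨i, hi⟩; rw [one_zpow] at hi; exact (hi).symm
  · rw [hterr]
    have hγm : z.top γ ≠ γ := by have h' := hγ; rw [hterr] at h'; exact h'
    ext δ
    simp only [Set.mem_setOf_eq, hsc]
    constructor
    · intro hδ; exact hcyc.sameCycle hγm hδ
    · intro hδ
      intro hfix
      exact hγm (hδ.apply_eq_self_iff.mpr hfix)

lemma terr_nonempty {z : Wr K Γ} (hz : IsWreathCycle z) : (terr z).Nonempty := by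
  rcases hz with ⟨_, γ₀, hterr⟩ | ⟨hcyc, hterr⟩
  · exact ⟨γ₀, hterr ▸ rfl⟩
  · obtain ⟨x, hx, -⟩ := hcyc
    exact ⟨x, hterr ▸ hx⟩

end Wr


open Wr

/-- the decomposition into pairwise disjoint wreath cycles is
unique up to reordering of the factors. -/
theorem wreathCycle_decomposition_unique {K Γ : Type*} [Group K] [Fintype Γ]
    (l₁ l₂ : List (Wr K Γ))
    (hc₁ : ∀ z ∈ l₁, IsWreathCycle z)
    (hd₁ : l₁.Pairwise fun z v => Disjoint (terr z) (terr v))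
    (hc₂ : ∀ z ∈ l₂, IsWreathCycle z)
    (hd₂ : l₂.Pairwise fun z v => Disjoint (terr z) (terr v))
    (hprod : l₁.prod = l₂.prod) :
    l₁.Perm l₂ := by
  have nodup : ∀ (l : List (Wr K Γ)), (∀ z ∈ l, IsWreathCycle z) →
      (l.Pairwise fun z v => Disjoint (terr z) (terr v)) → l.Nodup := by
    intro l hc hd
    refine List.Pairwise.imp_of_mem ?_ hd
    intro a b ha _ hab
    rintro rfl
    exact (terr_nonempty (hc a ha)).ne_empty (disjoint_self.mp hab)
  have key : ∀ (la lb : List (Wr K Γ)), (∀ z ∈ la, IsWreathCycle z) →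
      (la.Pairwise fun z v => Disjoint (terr z) (terr v)) →
      (∀ z ∈ lb, IsWreathCycle z) →
      (lb.Pairwise fun z v => Disjoint (terr z) (terr v)) →
      la.prod = lb.prod → ∀ z ∈ la, z ∈ lb := by
    intro la lb hca hda hcb hdb hp z hz
    obtain ⟨γ, hγ⟩ := terr_nonempty (hca z hz)
    have Ha := (prod_spec la hda).2 z hz
    -- find v in lb whose territory contains γ
    have hex : ∃ v ∈ lb, γ ∈ terr v := by
      by_contra hcon
      push_neg at hcon
      have H := (prod_spec lb hdb).1 γ hcon
      rw [← hp] at H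
      obtain ⟨h1, h2⟩ := Ha γ hγ
      rcases hγ with hm | hm
      · exact hm (by rw [← h2, H.2])
      · exact hm (by rw [← h1, H.1])
    obtain ⟨v, hv, hγv⟩ := hex
    have Hb := (prod_spec lb hdb).2 v hv
    -- both territories equal the same-cycle set of the product
    have hta : terr z = {δ | la.prod.top.SameCycle γ δ} :=
      terr_eq_sameCycle (hca z hz) hγ (fun δ hδ => (Ha δ hδ).2)
    have htb : terr v = {δ | la.prod.top.SameCycle γ δ} := by
      rw [hp]
      exact terr_eq_sameCycle (hcb v hv) hγv (fun δ hδ => (Hb δ hδ).2)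
    have hterr : terr z = terr v := by rw [hta, htb]
    have hzv : z = v := by
      apply ext'
      · funext δ
        by_cases hδ : δ ∈ terr z
        · have hδv : δ ∈ terr v := hterr ▸ hδ
          rw [← (Ha δ hδ).1, hp, (Hb δ hδv).1]
        · rw [base_eq_one_of_not_mem_terr hδ,
            base_eq_one_of_not_mem_terr (hterr ▸ hδ : δ ∉ terr v)]
      · apply Equiv.ext
        intro δ
        by_cases hδ : δ ∈ terr z
        · have hδv : δ ∈ terr v := hterr ▸ hδ
          rw [← (Ha δ hδ).2, hp, (Hb δ hδv).2]
        · rw [top_eq_self_of_not_mem_terr hδ,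
            top_eq_self_of_not_mem_terr (hterr ▸ hδ : δ ∉ terr v)]
    exact hzv ▸ hv
  rw [List.perm_ext_iff_of_nodup (nodup l₁ hc₁ hd₁) (nodup l₂ hc₂ hd₂)]
  intro z
  exact ⟨fun hz => key l₁ l₂ hc₁ hd₁ hc₂ hd₂ hprod z hz,
    fun hz => key l₂ l₁ hc₂ hd₂ hc₁ hd₁ hprod.symm z hz⟩
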